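/- With the notation of the context, the identity a₁∘a₂ − a₂∘a₁ = τ∘(a₁ − a₂) holds in End_k(N(S)) for every finite set S if and only if both of the following hold: (a) for all finite sets S and all i,j,k,ℓ ∈ S with i ≠ ℓ, i ≠ k, j ≠ ℓ and j ≠ k: φ^{S∖ℓ}_{i,j} ∘ φ^{S∖j}_{ℓ,k} = φ^{S∖i}_{ℓ,k} ∘ φ^{S∖k}_{i,j} (i.e., the operations α and ω commute with themselves and each other); and (b) for all finite sets S and all distinct i,j,k ∈ S: α^{S∖i}_{j,k} ∘ α^{S∖k}_{i,j} = α^{S∖j}_{i,k}. (This characterizes when the data (α, ω) defines a representation of the curried general linear algebra on the standard FB-module.) -/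

import Mathlib

/-- An FB-module over `k`: a functor from the groupoid of finite sets (modelled as finite
subsets of `ℕ`) and bijections to `k`-modules.  A bijection `S → T` is encoded by a
function `f : ℕ → ℕ` that is injective on `S` with `S.image f = T`; the functor only
depends on the restriction of `f` to `S` (`map_congr`). -/
structure FBModule (k : Type) [CommRing k] where
  M : Finset ℕ → Type
  [acg : ∀ S, AddCommGroup (M S)]
  [mod : ∀ S, Module k (M S)]
  map : ∀ (f : ℕ → ℕ) (S T : Finset ℕ), Set.InjOn f S → S.image f = T → (M S →ₗ[k] M T)
  map_id : ∀ (S : Finset ℕ) (h1 : Set.InjOn (id : ℕ → ℕ) S) (h2 : S.image id = S),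
    map id S S h1 h2 = LinearMap.id
  map_comp : ∀ (f g : ℕ → ℕ) (S T U : Finset ℕ) (h1 : Set.InjOn f S) (h2 : S.image f = T)
    (h3 : Set.InjOn g T) (h4 : T.image g = U) (h5 : Set.InjOn (g ∘ f) S)
    (h6 : S.image (g ∘ f) = U),
    map g T U h3 h4 ∘ₗ map f S T h1 h2 = map (g ∘ f) S U h5 h6
  map_congr : ∀ (f g : ℕ → ℕ) (S T : Finset ℕ) (h : ∀ x ∈ S, f x = g x)
    (h1 : Set.InjOn f S) (h2 : S.image f = T) (h3 : Set.InjOn g S) (h4 : S.image g = T),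
    map f S T h1 h2 = map g S T h3 h4

attribute [instance] FBModule.acg FBModule.mod

variable {k : Type} [CommRing k]

/-- The canonical identification `M(s) ≅ M(t)` for equal finite sets `s = t` (the action
of the identity bijection). -/
def FBModule.cast (N : FBModule k) {s t : Finset ℕ} (h : s = t) : N.M s →ₗ[k] N.M t :=
  N.map id s t (Set.injOn_id _) (by rwa [Finset.image_id])


section Helpers

lemma sdiff_pair (S : Finset ℕ) (i j : ℕ) : S \ ({i, j} : Finset ℕ) = (S \ {i}) \ {j} := by
  ext x
  simp only [Finset.mem_sdiff, Finset.mem_insert, Finset.mem_singleton, not_or]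
  tauto

lemma sdiff_sdiff_comm' (S A B : Finset ℕ) : (S \ A) \ B = (S \ B) \ A := by
  ext x
  simp only [Finset.mem_sdiff]
  tauto

end Helpers

namespace Stmt15

variable {k : Type} [CommRing k] (N : FBModule k)

/-- The index set of `N(S) = ⊕_{(i,j) ∈ S × S, i ≠ j} M(S∖{i,j})`:
ordered pairs of distinct elements of `S`. -/
def ι (S : Finset ℕ) : Type := {p : ℕ × ℕ // p.1 ∈ S ∧ p.2 ∈ S ∧ p.1 ≠ p.2}

instance (S : Finset ℕ) : DecidableEq (ι S) := fun _ _ =>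
  decidable_of_iff _ Subtype.ext_iff.symm

/-- `N(S) = ⊕_{(i,j) ∈ S × S, i ≠ j} M(S∖{i,j})`, realizing `(V ⊗ V ⊗ M)(S)` for the
standard FB-module `V`. -/
def NS (S : Finset ℕ) : Type := DirectSum (ι S) (fun p => N.M (S \ {p.1.1, p.1.2}))

instance (S : Finset ℕ) : AddCommGroup (NS N S) := by unfold NS; infer_instance
instance (S : Finset ℕ) : Module k (NS N S) := by unfold NS; infer_instance

/-- `τ : N(S) → N(S)`, mapping the `(i,j)`-component identically onto the
`(j,i)`-component. -/
noncomputable def tauN (S : Finset ℕ) : NS N S →ₗ[k] NS N S :=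
  DirectSum.toModule k (ι S) (NS N S) (fun p =>
    (DirectSum.lof k (ι S) (fun q => N.M (S \ {q.1.1, q.1.2}))
        ⟨(p.1.2, p.1.1), ⟨p.2.2.1, p.2.1, p.2.2.2.symm⟩⟩) ∘ₗ
      N.cast (by rw [Finset.pair_comm]))

variable (φ : ∀ (T : Finset ℕ) (u v : ℕ), u ∈ T → v ∈ T → (N.M (T \ {v}) →ₗ[k] N.M (T \ {u})))

/-- `a₂ : N(S) → N(S)`, mapping the `(i,j)`-component to the `(i,j′)`-component (for
each `j′ ∈ S∖{i}`) by `φ^{S∖i}_{j′,j}`. -/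
noncomputable def a2N (S : Finset ℕ) : NS N S →ₗ[k] NS N S :=
  DirectSum.toModule k (ι S) (NS N S) (fun p =>
    ∑ j' ∈ (S \ {p.1.1}).attach,
      (DirectSum.lof k (ι S) (fun q => N.M (S \ {q.1.1, q.1.2}))
          ⟨(p.1.1, j'.1),
            ⟨p.2.1, (Finset.mem_sdiff.mp j'.2).1,
              fun h => (Finset.mem_sdiff.mp j'.2).2 (Finset.mem_singleton.mpr (Eq.symm h))⟩⟩) ∘ₗ
        N.cast (sdiff_pair S p.1.1 j'.1).symm ∘ₗ
        φ (S \ {p.1.1}) j'.1 p.1.2 j'.2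
          (Finset.mem_sdiff.mpr ⟨p.2.2.1, by simp [p.2.2.2.symm]⟩) ∘ₗ
        N.cast (sdiff_pair S p.1.1 p.1.2))

/-- `a₁ = τ ∘ a₂ ∘ τ`. -/
noncomputable def a1N (S : Finset ℕ) : NS N S →ₗ[k] NS N S :=
  tauN N S ∘ₗ a2N N φ S ∘ₗ tauN N S

end Stmt15

namespace Stmt15

variable {k : Type} [CommRing k] (N : FBModule k)

/-- Condition (a): the operations `α` and `ω` commute with themselves and each other;
uniformly in terms of `φ`: for `i, j, k, ℓ ∈ S` with `i ≠ ℓ`, `i ≠ k`, `j ≠ ℓ`, `j ≠ k`,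
`φ^{S∖ℓ}_{i,j} ∘ φ^{S∖j}_{ℓ,k} = φ^{S∖i}_{ℓ,k} ∘ φ^{S∖k}_{i,j}`. -/
def CondA (φ : ∀ (T : Finset ℕ) (u v : ℕ), u ∈ T → v ∈ T →
    (N.M (T \ {v}) →ₗ[k] N.M (T \ {u}))) : Prop :=
  ∀ (S : Finset ℕ) (i j kk l : ℕ) (hi : i ∈ S) (hj : j ∈ S) (hk : kk ∈ S) (hl : l ∈ S)
    (hil : i ≠ l) (hik : i ≠ kk) (hjl : j ≠ l) (hjk : j ≠ kk),
    φ (S \ {l}) i j (Finset.mem_sdiff.mpr ⟨hi, by simp [hil]⟩)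
        (Finset.mem_sdiff.mpr ⟨hj, by simp [hjl]⟩) ∘ₗ
      N.cast (sdiff_sdiff_comm' S {j} {l}) ∘ₗ
      φ (S \ {j}) l kk (Finset.mem_sdiff.mpr ⟨hl, by simp [hjl.symm]⟩)
        (Finset.mem_sdiff.mpr ⟨hk, by simp [hjk.symm]⟩) =
    N.cast (sdiff_sdiff_comm' S {i} {l}) ∘ₗ
      φ (S \ {i}) l kk (Finset.mem_sdiff.mpr ⟨hl, by simp [hil.symm]⟩)
        (Finset.mem_sdiff.mpr ⟨hk, by simp [hik.symm]⟩) ∘ₗ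
      N.cast (sdiff_sdiff_comm' S {kk} {i}) ∘ₗ
      φ (S \ {kk}) i j (Finset.mem_sdiff.mpr ⟨hi, by simp [hik]⟩)
        (Finset.mem_sdiff.mpr ⟨hj, by simp [hjk]⟩) ∘ₗ
      N.cast (sdiff_sdiff_comm' S {j} {kk})

/-- Condition (b): for distinct `i, j, k ∈ S`,
`α^{S∖i}_{j,k} ∘ α^{S∖k}_{i,j} = α^{S∖j}_{i,k}`. -/
def CondB (α : ∀ (T : Finset ℕ) (u v : ℕ), u ∈ T → v ∈ T → u ≠ v →
    (N.M (T \ {v}) →ₗ[k] N.M (T \ {u}))) : Prop :=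
  ∀ (S : Finset ℕ) (i j kk : ℕ) (hi : i ∈ S) (hj : j ∈ S) (hk : kk ∈ S)
    (hij : i ≠ j) (hik : i ≠ kk) (hjk : j ≠ kk),
    α (S \ {i}) j kk (Finset.mem_sdiff.mpr ⟨hj, by simp [hij.symm]⟩)
        (Finset.mem_sdiff.mpr ⟨hk, by simp [hik.symm]⟩) hjk ∘ₗ
      N.cast (sdiff_sdiff_comm' S {kk} {i}) ∘ₗ
      α (S \ {kk}) i j (Finset.mem_sdiff.mpr ⟨hi, by simp [hik]⟩)
        (Finset.mem_sdiff.mpr ⟨hj, by simp [hjk]⟩) hij =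
    N.cast (sdiff_sdiff_comm' S {j} {i}) ∘ₗ
      α (S \ {j}) i kk (Finset.mem_sdiff.mpr ⟨hi, by simp [hij]⟩)
        (Finset.mem_sdiff.mpr ⟨hk, by simp [hjk.symm]⟩) hik ∘ₗ
      N.cast (sdiff_sdiff_comm' S {kk} {j})


section Aux
variable {N : FBModule k}

@[simp] lemma cast_self {s : Finset ℕ} (h : s = s) (x : N.M s) : N.cast h x = x := by
  show N.map id s s _ _ x = x
  rw [N.map_id]; rfl

@[simp] lemma cast_cast {s t u : Finset ℕ} (h1 : s = t) (h2 : t = u) (x : N.M s) :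
    N.cast h2 (N.cast h1 x) = N.cast (h1.trans h2) x := by
  subst h1; subst h2; simp

lemma memd {S : Finset ℕ} {x y : ℕ} (hx : x ∈ S) (hxy : x ≠ y) : x ∈ S \ {y} :=
  Finset.mem_sdiff.mpr ⟨hx, by simp [hxy]⟩

abbrev lofN (N : FBModule k) (S : Finset ℕ) (q : ι S) :
    N.M (S \ {q.1.1, q.1.2}) →ₗ[k] NS N S :=
  DirectSum.lof k (ι S) (fun q => N.M (S \ {q.1.1, q.1.2})) q

abbrev compN (N : FBModule k) (S : Finset ℕ) (q : ι S) :
    NS N S →ₗ[k] N.M (S \ {q.1.1, q.1.2}) :=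
  DirectSum.component k (ι S) (fun q => N.M (S \ {q.1.1, q.1.2})) q

lemma comp_lof_ne {S : Finset ℕ} (p q : ι S) (h : p ≠ q) (x : N.M (S \ {p.1.1, p.1.2})) :
    compN N S q (lofN N S p x) = 0 := by
  erw [DirectSum.component.of]
  rw [dif_neg h]

lemma comp_lof_self {S : Finset ℕ} (p : ι S) (x : N.M (S \ {p.1.1, p.1.2})) :
    compN N S p (lofN N S p x) = x := by
  erw [DirectSum.component.of]
  rw [dif_pos rfl]

lemma tauN_lof {S : Finset ℕ} (p : ι S) (x : N.M (S \ {p.1.1, p.1.2})) :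
    tauN N S (lofN N S p x) =
      lofN N S ⟨(p.1.2, p.1.1), ⟨p.2.2.1, p.2.1, p.2.2.2.symm⟩⟩
        (N.cast (by rw [Finset.pair_comm]) x) := by
  unfold tauN
  erw [DirectSum.toModule_lof]
  rfl

variable (φ : ∀ (T : Finset ℕ) (u v : ℕ), u ∈ T → v ∈ T → (N.M (T \ {v}) →ₗ[k] N.M (T \ {u})))

lemma a2N_lof {S : Finset ℕ} (p : ι S) (x : N.M (S \ {p.1.1, p.1.2})) :
    a2N N φ S (lofN N S p x) =
      ∑ j' ∈ (S \ {p.1.1}).attach,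
        lofN N S ⟨(p.1.1, j'.1), p.2.1, (Finset.mem_sdiff.mp j'.2).1,
            fun h => (Finset.mem_sdiff.mp j'.2).2 (Finset.mem_singleton.mpr (Eq.symm h))⟩
          (N.cast (sdiff_pair S p.1.1 j'.1).symm
            (φ (S \ {p.1.1}) j'.1 p.1.2 j'.2 (memd p.2.2.1 (Ne.symm p.2.2.2))
              (N.cast (sdiff_pair S p.1.1 p.1.2) x))) := by
  unfold a2N
  erw [DirectSum.toModule_lof]
  rw [LinearMap.sum_apply]
  rfl

lemma a1N_lof {S : Finset ℕ} (p : ι S) (x : N.M (S \ {p.1.1, p.1.2})) :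
    a1N N φ S (lofN N S p x) =
      ∑ i' ∈ (S \ {p.1.2}).attach,
        lofN N S ⟨(i'.1, p.1.2), (Finset.mem_sdiff.mp i'.2).1, p.2.2.1,
            fun h => (Finset.mem_sdiff.mp i'.2).2 (Finset.mem_singleton.mpr h)⟩
          (N.cast ((sdiff_pair S p.1.2 i'.1).symm.trans (by rw [Finset.pair_comm]))
            (φ (S \ {p.1.2}) i'.1 p.1.1 i'.2 (memd p.2.1 p.2.2.2)
              (N.cast ((by rw [Finset.pair_comm] : S \ {p.1.1, p.1.2} = S \ {p.1.2, p.1.1}).trans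
                (sdiff_pair S p.1.2 p.1.1)) x))) := by
  unfold a1N
  simp only [LinearMap.comp_apply]
  rw [tauN_lof]; rw [a2N_lof φ (⟨(p.1.2, p.1.1), p.2.2.1, p.2.1, p.2.2.2.symm⟩ : ι S)]; rw [map_sum]
  refine Finset.sum_congr rfl fun i' _ => ?_
  erw [tauN_lof]
  congr 1
  simp

lemma comp_a2N_lof_ne {S : Finset ℕ} (p q : ι S) (h : q.1.1 ≠ p.1.1)
    (x : N.M (S \ {p.1.1, p.1.2})) :
    compN N S q (a2N N φ S (lofN N S p x)) = 0 := by
  rw [a2N_lof, map_sum]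
  refine Finset.sum_eq_zero fun j' _ => comp_lof_ne _ _ (fun hc => h ?_) _
  exact (congrArg (fun (r : ι S) => r.1.1) hc).symm

lemma comp_a1N_lof_ne {S : Finset ℕ} (p q : ι S) (h : q.1.2 ≠ p.1.2)
    (x : N.M (S \ {p.1.1, p.1.2})) :
    compN N S q (a1N N φ S (lofN N S p x)) = 0 := by
  rw [a1N_lof, map_sum]
  refine Finset.sum_eq_zero fun i' _ => comp_lof_ne _ _ (fun hc => h ?_) _
  exact (congrArg (fun (r : ι S) => r.1.2) hc).symm

lemma comp_a2N_lof_eq {S : Finset ℕ} (p : ι S) (b : ℕ) (hb : b ∈ S) (hib : p.1.1 ≠ b)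
    (x : N.M (S \ {p.1.1, p.1.2})) :
    compN N S ⟨(p.1.1, b), p.2.1, hb, hib⟩ (a2N N φ S (lofN N S p x)) =
      N.cast (sdiff_pair S p.1.1 b).symm
        (φ (S \ {p.1.1}) b p.1.2 (memd hb (Ne.symm hib)) (memd p.2.2.1 (Ne.symm p.2.2.2))
          (N.cast (sdiff_pair S p.1.1 p.1.2) x)) := by
  rw [a2N_lof, map_sum]
  rw [Finset.sum_eq_single (⟨b, memd hb (Ne.symm hib)⟩ : {v // v ∈ S \ {p.1.1}})]
  · exact comp_lof_self _ _
  · intro j' _ hne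
    refine comp_lof_ne _ _ (fun hc => hne ?_) _
    exact Subtype.ext (congrArg (fun (r : ι S) => r.1.2) hc)
  · intro h; exact absurd (Finset.mem_attach _ _) h

lemma comp_a1N_lof_eq {S : Finset ℕ} (p : ι S) (a : ℕ) (ha : a ∈ S) (haj : a ≠ p.1.2)
    (x : N.M (S \ {p.1.1, p.1.2})) :
    compN N S ⟨(a, p.1.2), ha, p.2.2.1, haj⟩ (a1N N φ S (lofN N S p x)) =
      N.cast ((sdiff_pair S p.1.2 a).symm.trans (by rw [Finset.pair_comm]))
        (φ (S \ {p.1.2}) a p.1.1 (memd ha haj) (memd p.2.1 p.2.2.2)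
          (N.cast ((by rw [Finset.pair_comm] : S \ {p.1.1, p.1.2} = S \ {p.1.2, p.1.1}).trans
            (sdiff_pair S p.1.2 p.1.1)) x)) := by
  rw [a1N_lof, map_sum]
  rw [Finset.sum_eq_single (⟨a, memd ha haj⟩ : {v // v ∈ S \ {p.1.2}})]
  · exact comp_lof_self _ _
  · intro i' _ hne
    refine comp_lof_ne _ _ (fun hc => hne ?_) _
    exact Subtype.ext (congrArg (fun (r : ι S) => r.1.1) hc)
  · intro h; exact absurd (Finset.mem_attach _ _) h

end Aux

section Aux2
variable {N : FBModule k}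
variable (φ : ∀ (T : Finset ℕ) (u v : ℕ), u ∈ T → v ∈ T → (N.M (T \ {v}) →ₗ[k] N.M (T \ {u})))

lemma comp_a1a2_zero {S : Finset ℕ} (p q : ι S) (h : q.1.2 = p.1.1)
    (x : N.M (S \ {p.1.1, p.1.2})) :
    compN N S q (a1N N φ S (a2N N φ S (lofN N S p x))) = 0 := by
  rw [a2N_lof, map_sum, map_sum]
  refine Finset.sum_eq_zero fun j' _ => comp_a1N_lof_ne φ _ _ ?_ _
  show q.1.2 ≠ j'.1
  rw [h]
  exact fun hc => (Finset.mem_sdiff.mp j'.2).2 (Finset.mem_singleton.mpr hc.symm)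

lemma comp_a2a1_zero {S : Finset ℕ} (p q : ι S) (h : q.1.1 = p.1.2)
    (x : N.M (S \ {p.1.1, p.1.2})) :
    compN N S q (a2N N φ S (a1N N φ S (lofN N S p x))) = 0 := by
  rw [a1N_lof, map_sum, map_sum]
  refine Finset.sum_eq_zero fun i' _ => comp_a2N_lof_ne φ _ _ ?_ _
  show q.1.1 ≠ i'.1
  rw [h]
  exact fun hc => (Finset.mem_sdiff.mp i'.2).2 (Finset.mem_singleton.mpr hc.symm)

lemma comp_a1a2_eq {S : Finset ℕ} (p : ι S) (a b : ℕ) (ha : a ∈ S) (hb : b ∈ S)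
    (hab : a ≠ b) (hbi : b ≠ p.1.1) (x : N.M (S \ {p.1.1, p.1.2})) :
    compN N S ⟨(a, b), ha, hb, hab⟩ (a1N N φ S (a2N N φ S (lofN N S p x))) =
      N.cast ((sdiff_pair S b a).symm.trans (by rw [Finset.pair_comm]))
        (φ (S \ {b}) a p.1.1 (memd ha hab) (memd p.2.1 (Ne.symm hbi))
          (N.cast (sdiff_sdiff_comm' S {p.1.1} {b})
            (φ (S \ {p.1.1}) b p.1.2 (memd hb hbi) (memd p.2.2.1 (Ne.symm p.2.2.2))
              (N.cast (sdiff_pair S p.1.1 p.1.2) x)))) := by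
  rw [a2N_lof, map_sum, map_sum]
  rw [Finset.sum_eq_single (⟨b, memd hb hbi⟩ : {v // v ∈ S \ {p.1.1}})]
  · erw [comp_a1N_lof_eq φ ⟨(p.1.1, b), p.2.1, hb, Ne.symm hbi⟩ a ha hab]
    simp
  · intro j' _ hne
    refine comp_a1N_lof_ne φ _ _ (fun hc => hne (Subtype.ext ?_)) _
    exact hc.symm
  · intro h; exact absurd (Finset.mem_attach _ _) h

lemma comp_a2a1_eq {S : Finset ℕ} (p : ι S) (a b : ℕ) (ha : a ∈ S) (hb : b ∈ S)
    (hab : a ≠ b) (haj : a ≠ p.1.2) (x : N.M (S \ {p.1.1, p.1.2})) :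
    compN N S ⟨(a, b), ha, hb, hab⟩ (a2N N φ S (a1N N φ S (lofN N S p x))) =
      N.cast (sdiff_pair S a b).symm
        (φ (S \ {a}) b p.1.2 (memd hb (Ne.symm hab)) (memd p.2.2.1 (Ne.symm haj))
          (N.cast (sdiff_sdiff_comm' S {p.1.2} {a})
            (φ (S \ {p.1.2}) a p.1.1 (memd ha haj) (memd p.2.1 p.2.2.2)
              (N.cast ((by rw [Finset.pair_comm] :
                  S \ {p.1.1, p.1.2} = S \ {p.1.2, p.1.1}).trans
                (sdiff_pair S p.1.2 p.1.1)) x)))) := by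
  rw [a1N_lof, map_sum, map_sum]
  rw [Finset.sum_eq_single (⟨a, memd ha haj⟩ : {v // v ∈ S \ {p.1.2}})]
  · erw [comp_a2N_lof_eq φ ⟨(a, p.1.2), ha, p.2.2.1, haj⟩ b hb hab]
    simp
  · intro i' _ hne
    refine comp_a2N_lof_ne φ _ _ (fun hc => hne (Subtype.ext ?_)) _
    exact hc.symm
  · intro h; exact absurd (Finset.mem_attach _ _) h

end Aux2

section Aux3
variable {N : FBModule k}
variable (φ : ∀ (T : Finset ℕ) (u v : ℕ), u ∈ T → v ∈ T → (N.M (T \ {v}) →ₗ[k] N.M (T \ {u})))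

lemma comp_tau_a1_zero {S : Finset ℕ} (p q : ι S) (h : q.1.1 ≠ p.1.2)
    (x : N.M (S \ {p.1.1, p.1.2})) :
    compN N S q (tauN N S (a1N N φ S (lofN N S p x))) = 0 := by
  rw [a1N_lof, map_sum, map_sum]
  refine Finset.sum_eq_zero fun i' _ => ?_
  erw [tauN_lof]
  refine comp_lof_ne _ _ (fun hc => h ?_) _
  exact (congrArg (fun (r : ι S) => r.1.1) hc).symm

lemma comp_tau_a2_zero {S : Finset ℕ} (p q : ι S) (h : q.1.2 ≠ p.1.1)
    (x : N.M (S \ {p.1.1, p.1.2})) :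
    compN N S q (tauN N S (a2N N φ S (lofN N S p x))) = 0 := by
  rw [a2N_lof, map_sum, map_sum]
  refine Finset.sum_eq_zero fun j' _ => ?_
  erw [tauN_lof]
  refine comp_lof_ne _ _ (fun hc => h ?_) _
  exact (congrArg (fun (r : ι S) => r.1.2) hc).symm

lemma comp_tau_a1_eq {S : Finset ℕ} (p : ι S) (b : ℕ) (hb : b ∈ S) (hqb : p.1.2 ≠ b)
    (x : N.M (S \ {p.1.1, p.1.2})) :
    compN N S ⟨(p.1.2, b), p.2.2.1, hb, hqb⟩ (tauN N S (a1N N φ S (lofN N S p x))) =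
      N.cast (sdiff_pair S p.1.2 b).symm
        (φ (S \ {p.1.2}) b p.1.1 (memd hb (Ne.symm hqb)) (memd p.2.1 p.2.2.2)
          (N.cast ((by rw [Finset.pair_comm] :
              S \ {p.1.1, p.1.2} = S \ {p.1.2, p.1.1}).trans
            (sdiff_pair S p.1.2 p.1.1)) x)) := by
  rw [a1N_lof, map_sum, map_sum]
  rw [Finset.sum_eq_single (⟨b, memd hb (Ne.symm hqb)⟩ : {v // v ∈ S \ {p.1.2}})]
  · erw [tauN_lof]
    erw [comp_lof_self]
    simp
  · intro i' _ hne
    erw [tauN_lof]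
    refine comp_lof_ne _ _ (fun hc => hne (Subtype.ext ?_)) _
    exact congrArg (fun (r : ι S) => r.1.2) hc
  · intro h; exact absurd (Finset.mem_attach _ _) h

lemma comp_tau_a2_eq {S : Finset ℕ} (p : ι S) (a : ℕ) (ha : a ∈ S) (hap : a ≠ p.1.1)
    (x : N.M (S \ {p.1.1, p.1.2})) :
    compN N S ⟨(a, p.1.1), ha, p.2.1, hap⟩ (tauN N S (a2N N φ S (lofN N S p x))) =
      N.cast ((sdiff_pair S p.1.1 a).symm.trans (by rw [Finset.pair_comm]))
        (φ (S \ {p.1.1}) a p.1.2 (memd ha hap) (memd p.2.2.1 (Ne.symm p.2.2.2))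
          (N.cast (sdiff_pair S p.1.1 p.1.2) x)) := by
  rw [a2N_lof, map_sum, map_sum]
  rw [Finset.sum_eq_single (⟨a, memd ha hap⟩ : {v // v ∈ S \ {p.1.1}})]
  · erw [tauN_lof]
    erw [comp_lof_self]
    simp
  · intro j' _ hne
    erw [tauN_lof]
    refine comp_lof_ne _ _ (fun hc => hne (Subtype.ext ?_)) _
    exact congrArg (fun (r : ι S) => r.1.1) hc
  · intro h; exact absurd (Finset.mem_attach _ _) h

end Aux3

/-- for an FB-module `M` with a natural endomorphism `ω`, a natural family
`α^S_{i,j} : M(S∖{j}) → M(S∖{i})` (for `i ≠ j` in `S`), and `φ` the combined family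
(`φ^T_{u,v} = α^T_{u,v}` for `u ≠ v`, `φ^T_{u,u} = ω^{T∖{u}}`), the curried gl identity
`a₁∘a₂ − a₂∘a₁ = τ∘(a₁ − a₂)` holds in `End(N(S))` for every finite `S` (where
`N(S) = (V ⊗ V ⊗ M)(S)` with `τ, a₂, a₁` as in the context) if and only if
(a) `α` and `ω` commute with themselves and each other, and
(b) `α^{S∖i}_{j,k} ∘ α^{S∖k}_{i,j} = α^{S∖j}_{i,k}` for distinct `i, j, k ∈ S`;
i.e. exactly when `(α, ω)` defines a representation of the curried general linear
algebra on the standard FB-module. -/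
theorem statement15
    (ω : ∀ T : Finset ℕ, N.M T →ₗ[k] N.M T)
    (hωnat : ∀ (f : ℕ → ℕ) (S T : Finset ℕ) (hf : Set.InjOn f S) (hT : S.image f = T),
      N.map f S T hf hT ∘ₗ ω S = ω T ∘ₗ N.map f S T hf hT)
    (α : ∀ (T : Finset ℕ) (u v : ℕ), u ∈ T → v ∈ T → u ≠ v →
      (N.M (T \ {v}) →ₗ[k] N.M (T \ {u})))
    (hαnat : ∀ (f : ℕ → ℕ) (S T : Finset ℕ) (i j : ℕ) (hi : i ∈ S) (hj : j ∈ S)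
      (hij : i ≠ j) (hf : Set.InjOn f S) (hT : S.image f = T)
      (hi' : f i ∈ T) (hj' : f j ∈ T) (hij' : f i ≠ f j)
      (h1 : Set.InjOn f ((S \ {j} : Finset ℕ) : Set ℕ))
      (h2 : (S \ {j}).image f = T \ {f j})
      (h3 : Set.InjOn f ((S \ {i} : Finset ℕ) : Set ℕ))
      (h4 : (S \ {i}).image f = T \ {f i}),
      N.map f (S \ {i}) (T \ {f i}) h3 h4 ∘ₗ α S i j hi hj hij =
        α T (f i) (f j) hi' hj' hij' ∘ₗ N.map f (S \ {j}) (T \ {f j}) h1 h2)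
    (φ : ∀ (T : Finset ℕ) (u v : ℕ), u ∈ T → v ∈ T →
      (N.M (T \ {v}) →ₗ[k] N.M (T \ {u})))
    (hφoff : ∀ (T : Finset ℕ) (u v : ℕ) (hu : u ∈ T) (hv : v ∈ T) (huv : u ≠ v),
      φ T u v hu hv = α T u v hu hv huv)
    (hφdiag : ∀ (T : Finset ℕ) (u : ℕ) (hu hu' : u ∈ T),
      φ T u u hu hu' = ω (T \ {u})) :
    (∀ S : Finset ℕ,
      a1N N φ S ∘ₗ a2N N φ S - a2N N φ S ∘ₗ a1N N φ S =
        tauN N S ∘ₗ (a1N N φ S - a2N N φ S)) ↔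
    (CondA N φ ∧ CondB N α) := by
  have ωcast : ∀ {s t : Finset ℕ} (h : s = t) (x : N.M s),
      N.cast h (ω s x) = ω t (N.cast h x) := by
    intro s t h x
    exact LinearMap.congr_fun
      (hωnat id s t (Set.injOn_id _) (by rwa [Finset.image_id])) x
  constructor
  · intro H
    have key : ∀ (S : Finset ℕ) (p q : ι S) (x : N.M (S \ {p.1.1, p.1.2})),
        compN N S q (a1N N φ S (a2N N φ S (lofN N S p x))) -
          compN N S q (a2N N φ S (a1N N φ S (lofN N S p x))) =
        compN N S q (tauN N S (a1N N φ S (lofN N S p x))) -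
          compN N S q (tauN N S (a2N N φ S (lofN N S p x))) := by
      intro S p q x
      have := LinearMap.congr_fun (H S) (lofN N S p x)
      simp only [LinearMap.sub_apply, LinearMap.comp_apply, map_sub] at this
      exact congrArg (compN N S q) this |>.trans (by simp) |>.symm.trans (by simp) |>.symm
    constructor
    · -- CondA
      intro S i j kk l hi hj hk hl hil hik hjl hjk
      apply LinearMap.ext; intro y
      have hk2 : ((⟨(j, kk), hj, hk, hjk⟩ : ι S)).1.1 = j := rfl
      have this1 := key S ⟨(j, kk), hj, hk, hjk⟩ ⟨(i, l), hi, hl, hil⟩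
        (N.cast (sdiff_pair S j kk).symm y)
      rw [comp_a1a2_eq φ ⟨(j, kk), hj, hk, hjk⟩ i l hi hl hil (Ne.symm hjl),
          comp_a2a1_eq φ ⟨(j, kk), hj, hk, hjk⟩ i l hi hl hil hik,
          comp_tau_a1_zero φ ⟨(j, kk), hj, hk, hjk⟩ ⟨(i, l), hi, hl, hil⟩ hik,
          comp_tau_a2_zero φ ⟨(j, kk), hj, hk, hjk⟩ ⟨(i, l), hi, hl, hil⟩ (Ne.symm hjl)] at this1
      simp only [sub_zero, sub_eq_zero] at this1
      have this2 := congrArg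
        (N.cast ((show S \ {i, l} = S \ {l, i} by rw [Finset.pair_comm]).trans
          (sdiff_pair S l i))) this1
      simp only [cast_cast, cast_self, LinearMap.comp_apply] at this2 ⊢
      exact this2
    · -- CondB
      intro S i j kk hi hj hk hij hik hjk
      apply LinearMap.ext; intro y
      have this1 := key S ⟨(kk, j), hk, hj, Ne.symm hjk⟩ ⟨(j, i), hj, hi, Ne.symm hij⟩
        (N.cast (sdiff_pair S kk j).symm y)
      rw [comp_a1a2_eq φ ⟨(kk, j), hk, hj, Ne.symm hjk⟩ j i hj hi (Ne.symm hij) hik,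
          comp_a2a1_zero φ ⟨(kk, j), hk, hj, Ne.symm hjk⟩ ⟨(j, i), hj, hi, Ne.symm hij⟩ rfl,
          comp_tau_a1_eq φ ⟨(kk, j), hk, hj, Ne.symm hjk⟩ i hi (Ne.symm hij),
          comp_tau_a2_zero φ ⟨(kk, j), hk, hj, Ne.symm hjk⟩ ⟨(j, i), hj, hi, Ne.symm hij⟩ hik] at this1
      simp only [sub_zero] at this1
      rw [hφoff (S \ {i}) j kk _ _ hjk, hφoff (S \ {kk}) i j _ _ hij,
          hφoff (S \ {j}) i kk _ _ hik] at this1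
      have this2 := congrArg
        (N.cast ((show S \ {j, i} = S \ {i, j} by rw [Finset.pair_comm]).trans
          (sdiff_pair S i j))) this1
      simp only [cast_cast, cast_self, LinearMap.comp_apply] at this2 ⊢
      exact this2
  · rintro ⟨hA, hB⟩ S
    refine DirectSum.linearMap_ext k fun p => ?_
    apply LinearMap.ext; intro x
    refine DirectSum.ext_component k fun q => ?_
    obtain ⟨⟨a, b⟩, ha, hb, hab⟩ := q
    show compN N S ⟨(a, b), ha, hb, hab⟩
        ((a1N N φ S ∘ₗ a2N N φ S - a2N N φ S ∘ₗ a1N N φ S) (lofN N S p x)) =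
      compN N S ⟨(a, b), ha, hb, hab⟩ ((tauN N S ∘ₗ (a1N N φ S - a2N N φ S)) (lofN N S p x))
    simp only [LinearMap.sub_apply, LinearMap.comp_apply, map_sub]
    by_cases hbi : b = p.1.1 <;> by_cases haj : a = p.1.2
    · -- a = p.1.2, b = p.1.1 : omega case
      subst hbi; subst haj
      rw [comp_a1a2_zero φ p ⟨(p.1.2, p.1.1), ha, hb, hab⟩ rfl, comp_a2a1_zero φ p ⟨(p.1.2, p.1.1), ha, hb, hab⟩ rfl,
          comp_tau_a1_eq φ p p.1.1 p.2.1 (Ne.symm p.2.2.2),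
          comp_tau_a2_eq φ p p.1.2 p.2.2.1 (Ne.symm p.2.2.2),
          hφdiag (S \ {p.1.2}) p.1.1, hφdiag (S \ {p.1.1}) p.1.2,
          ωcast, ωcast]
      simp only [cast_cast, sub_self]
    · -- b = p.1.1, a ≠ p.1.2 : CondB case (negative)
      subst hbi
      rw [comp_a1a2_zero φ p ⟨(a, p.1.1), ha, hb, hab⟩ rfl,
          comp_a2a1_eq φ p a p.1.1 ha p.2.1 hab haj,
          comp_tau_a1_zero φ p ⟨(a, p.1.1), ha, hb, hab⟩ haj,
          comp_tau_a2_eq φ p a ha hab,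
          hφoff (S \ {a}) p.1.1 p.1.2 _ _ p.2.2.2,
          hφoff (S \ {p.1.2}) a p.1.1 _ _ hab,
          hφoff (S \ {p.1.1}) a p.1.2 _ _ haj]
      have hBe := LinearMap.congr_fun
        (hB S a p.1.1 p.1.2 ha p.2.1 p.2.2.1 hab haj p.2.2.2)
        (N.cast ((show S \ {p.1.1, p.1.2} = S \ {p.1.2, p.1.1} by rw [Finset.pair_comm]).trans
          (sdiff_pair S p.1.2 p.1.1)) x)
      simp only [LinearMap.comp_apply] at hBe
      rw [hBe]
      simp only [cast_cast]
    · -- a = p.1.2, b ≠ p.1.1 : CondB case (positive)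
      subst haj
      rw [comp_a2a1_zero φ p ⟨(p.1.2, b), ha, hb, hab⟩ rfl,
          comp_a1a2_eq φ p p.1.2 b p.2.2.1 hb hab hbi,
          comp_tau_a2_zero φ p ⟨(p.1.2, b), ha, hb, hab⟩ hbi,
          comp_tau_a1_eq φ p b hb hab,
          hφoff (S \ {b}) p.1.2 p.1.1 _ _ (Ne.symm p.2.2.2),
          hφoff (S \ {p.1.1}) b p.1.2 _ _ (Ne.symm hab),
          hφoff (S \ {p.1.2}) b p.1.1 _ _ hbi]
      have hBe := LinearMap.congr_fun
        (hB S b p.1.2 p.1.1 hb p.2.2.1 p.2.1 (Ne.symm hab) hbi (Ne.symm p.2.2.2))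
        (N.cast (sdiff_pair S p.1.1 p.1.2) x)
      simp only [LinearMap.comp_apply] at hBe
      rw [hBe]
      simp only [cast_cast]
    · -- generic : CondA case
      rw [comp_a1a2_eq φ p a b ha hb hab hbi,
          comp_a2a1_eq φ p a b ha hb hab haj,
          comp_tau_a1_zero φ p ⟨(a, b), ha, hb, hab⟩ haj,
          comp_tau_a2_zero φ p ⟨(a, b), ha, hb, hab⟩ hbi]
      have hAe := LinearMap.congr_fun
        (hA S a p.1.1 p.1.2 b ha p.2.1 p.2.2.1 hb hab haj (fun h => hbi h.symm) p.2.2.2)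
        (N.cast (sdiff_pair S p.1.1 p.1.2) x)
      simp only [LinearMap.comp_apply] at hAe
      rw [hAe]
      simp only [cast_cast, sub_zero]
      exact sub_eq_zero_of_eq rfl

end Stmt15
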